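/- In the noiseless case p = 0, for every sorted probability distribution p_1 ≥ ⋯ ≥ p_N ≥ 0 the optimal one-query guessing time is G_opt(X) = (1/2)·(G(X) + Σ_{i=1}^{⌈N/2⌉} p_{2i−1}). -/

import Mathlib

open Finset

noncomputable def guess (N : ℕ) (q : Fin N → ℝ) : ℝ :=
  Finset.univ.inf' ⟨1, Finset.mem_univ 1⟩
    (fun σ : Equiv.Perm (Fin N) => ∑ k : Fin N, ((k : ℝ) + 1) * q (σ k))

noncomputable def guessA (N : ℕ) (q : Fin N → ℝ) (p : ℝ) (A : Finset (Fin N)) : ℝ :=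
  ∑ y : Bool, Finset.univ.inf' ⟨1, Finset.mem_univ 1⟩
    (fun σ : Equiv.Perm (Fin N) => ∑ k : Fin N,
      ((k : ℝ) + 1) * q (σ k) * (if ((σ k ∈ A) ↔ (y = true)) then 1 - p else p))

noncomputable def guessOpt (N : ℕ) (q : Fin N → ℝ) (p : ℝ) : ℝ :=
  Finset.univ.inf' ⟨∅, Finset.mem_univ ∅⟩ (fun A : Finset (Fin N) => guessA N q p A)

def zigzag (N : ℕ) : Finset (Fin N) := Finset.univ.filter (fun k => (k : ℕ) % 2 = 0)

noncomputable def wt (N : ℕ) (q : Fin N → ℝ) (p : ℝ) (i j : Fin N) : ℝ :=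
  max 0 ((1 - p) * min (q i) (q j) - p * max (q i) (q j))

noncomputable def cut (N : ℕ) (q : Fin N → ℝ) (p : ℝ) (A : Finset (Fin N)) : ℝ :=
  ∑ i ∈ A, ∑ j ∈ Aᶜ, wt N q p i j

noncomputable def maxcut (N : ℕ) (q : Fin N → ℝ) (p : ℝ) : ℝ :=
  Finset.univ.sup' ⟨∅, Finset.mem_univ ∅⟩ (fun A : Finset (Fin N) => cut N q p A)


section AuxG

variable {N : ℕ}

lemma sum_top (q : Fin N → ℝ) (hnn : ∀ i, 0 ≤ q i)
    (hsort : ∀ i j : Fin N, i ≤ j → q j ≤ q i) :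
    ∀ (m : ℕ) (S : Finset (Fin N)), S.card ≤ m →
      ∑ i ∈ S, q i ≤ ∑ i ∈ univ.filter (fun i : Fin N => (i : ℕ) < m), q i := by
  intro m
  induction m with
  | zero =>
    intro S hS
    have hS0 : S = ∅ := Finset.card_eq_zero.mp (Nat.le_zero.mp hS)
    subst hS0
    simpa using Finset.sum_nonneg fun i _ => hnn i
  | succ m ih =>
    intro S hS
    by_cases h : S.card ≤ m
    · refine (ih S h).trans (Finset.sum_le_sum_of_subset_of_nonneg ?_ ?_)
      · intro i hi; simp only [mem_filter, mem_univ, true_and] at hi ⊢; omega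
      · intro i _ _; exact hnn i
    · have hne : S.Nonempty := Finset.card_pos.mp (by omega)
      set i₀ := S.max' hne with hi0
      have hSsub : S.card ≤ (i₀ : ℕ) + 1 := by
        have := Finset.card_le_card_of_injOn (fun i : Fin N => (i : ℕ))
          (s := S) (t := Finset.range ((i₀ : ℕ) + 1))
          (fun i hi => by
            simp only [Finset.mem_coe, mem_range, Nat.lt_succ_iff]
            exact S.le_max' i hi)
          (fun a _ b _ hab => Fin.val_injective hab)
        simpa using this
      have hmi : m ≤ (i₀ : ℕ) := by omega
      have hmN : m < N := lt_of_le_of_lt hmi i₀.isLt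
      have hq : q i₀ ≤ q ⟨m, hmN⟩ := hsort _ _ (by simp [Fin.le_def]; omega)
      have hins : univ.filter (fun i : Fin N => (i : ℕ) < m + 1)
          = insert (⟨m, hmN⟩ : Fin N) (univ.filter fun i : Fin N => (i : ℕ) < m) := by
        ext i
        simp only [mem_filter, mem_univ, true_and, mem_insert, Fin.ext_iff]
        omega
      rw [hins, Finset.sum_insert (by simp)]
      have hih := ih (S.erase i₀) (by rw [Finset.card_erase_of_mem (S.max'_mem hne)]; omega)
      have hsplit : ∑ i ∈ S, q i = q i₀ + ∑ i ∈ S.erase i₀, q i :=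
        (Finset.add_sum_erase S q (S.max'_mem hne)).symm
      rw [hsplit]
      exact add_le_add hq hih

lemma counting (d : ℕ) (hd : 0 < d) (q : Fin N → ℝ) (hnn : ∀ i, 0 ≤ q i)
    (hsort : ∀ i j : Fin N, i ≤ j → q j ≤ q i)
    (c : Fin N → ℕ) (hcN : ∀ i, c i ≤ N)
    (hfib : ∀ v : ℕ, (univ.filter fun i : Fin N => c i ≤ v).card ≤ d * v) :
    ∑ i : Fin N, ((((i : ℕ) / d : ℕ) : ℝ) + 1) * q i ≤ ∑ i : Fin N, (c i : ℝ) * q i := by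
  have h1 : ∀ i : Fin N, (c i : ℝ) * q i = ∑ v ∈ Finset.range N, if v < c i then q i else 0 := by
    intro i
    rw [← Finset.sum_filter]
    have he : (Finset.range N).filter (fun v => v < c i) = Finset.range (c i) := by
      ext v; simp only [mem_filter, mem_range]; have := hcN i; omega
    rw [he, Finset.sum_const, Finset.card_range, nsmul_eq_mul]
  have h2 : ∀ i : Fin N, ((((i : ℕ) / d : ℕ) : ℝ) + 1) * q i
      = ∑ v ∈ Finset.range N, if d * v ≤ (i : ℕ) then q i else 0 := by
    intro i
    rw [← Finset.sum_filter]
    have he : (Finset.range N).filter (fun v => d * v ≤ (i : ℕ)) = Finset.range ((i : ℕ) / d + 1) := by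
      ext v
      simp only [mem_filter, mem_range, Nat.lt_succ_iff]
      constructor
      · rintro ⟨_, h⟩; exact (Nat.le_div_iff_mul_le hd).mpr (by rw [mul_comm]; exact h)
      · intro h
        refine ⟨lt_of_le_of_lt (h.trans (Nat.div_le_self _ _)) i.isLt, ?_⟩
        have h' := (Nat.le_div_iff_mul_le hd).mp h
        exact le_trans (le_of_eq (mul_comm d v)) h'
    rw [he, Finset.sum_const, Finset.card_range, nsmul_eq_mul]
    push_cast; ring
  simp_rw [h1, h2]
  calc ∑ i : Fin N, ∑ v ∈ Finset.range N, (if d * v ≤ (i : ℕ) then q i else 0)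
      = ∑ v ∈ Finset.range N, ∑ i : Fin N, (if d * v ≤ (i : ℕ) then q i else 0) := Finset.sum_comm
    _ ≤ ∑ v ∈ Finset.range N, ∑ i : Fin N, (if v < c i then q i else 0) := by
        refine Finset.sum_le_sum fun v _ => ?_
        rw [← Finset.sum_filter, ← Finset.sum_filter]
        have e1 := Finset.sum_filter_add_sum_filter_not univ (fun i : Fin N => d * v ≤ (i : ℕ)) q
        have e2 := Finset.sum_filter_add_sum_filter_not univ (fun i : Fin N => v < c i) q
        have hA : ∑ i ∈ univ.filter (fun i : Fin N => ¬ v < c i), q i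
            ≤ ∑ i ∈ univ.filter (fun i : Fin N => ¬ d * v ≤ (i : ℕ)), q i := by
          have hpred1 : univ.filter (fun i : Fin N => ¬ v < c i)
              = univ.filter (fun i : Fin N => c i ≤ v) := by
            apply Finset.filter_congr; intro i _; simp [not_lt]
          have hpred2 : univ.filter (fun i : Fin N => ¬ d * v ≤ (i : ℕ))
              = univ.filter (fun i : Fin N => (i : ℕ) < d * v) := by
            apply Finset.filter_congr; intro i _; simp [not_le]
          rw [hpred1, hpred2]
          exact sum_top q hnn hsort (d * v) _ (hfib v)
        linarith
    _ = ∑ i : Fin N, ∑ v ∈ Finset.range N, (if v < c i then q i else 0) := Finset.sum_comm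

lemma card_filter_perm_le (σ : Equiv.Perm (Fin N)) (P : Fin N → Prop) [DecidablePred P] (v : ℕ) :
    (univ.filter fun i : Fin N => P i ∧ (σ.symm i : ℕ) + 1 ≤ v).card ≤ v := by
  have := Finset.card_le_card_of_injOn (fun i : Fin N => (σ.symm i : ℕ))
    (s := univ.filter fun i : Fin N => P i ∧ (σ.symm i : ℕ) + 1 ≤ v) (t := Finset.range v)
    (by intro i hi; simp only [Finset.mem_coe, mem_filter, mem_univ, true_and] at hi; simp only [Finset.mem_coe, mem_range]; omega)
    (by intro a _ b _ h; exact σ.symm.injective (Fin.val_injective h))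
  simpa using this

def ftE (N : ℕ) : Fin N → Fin N := fun k =>
  if h : (k : ℕ) < (N + 1) / 2 then ⟨2 * (k : ℕ), by have := k.isLt; omega⟩
  else ⟨2 * ((k : ℕ) - (N + 1) / 2) + 1, by have := k.isLt; omega⟩

def ftO (N : ℕ) : Fin N → Fin N := fun k =>
  if h : (k : ℕ) < N / 2 then ⟨2 * (k : ℕ) + 1, by have := k.isLt; omega⟩
  else ⟨2 * ((k : ℕ) - N / 2), by have := k.isLt; omega⟩

lemma ftE_bij (N : ℕ) : Function.Bijective (ftE N) := by
  rw [← Finite.injective_iff_bijective]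
  intro a b hab
  unfold ftE at hab
  split_ifs at hab with h1 h2 h2 <;>
    (simp only [Fin.mk.injEq] at hab; exact Fin.ext (by omega))

lemma ftO_bij (N : ℕ) : Function.Bijective (ftO N) := by
  rw [← Finite.injective_iff_bijective]
  intro a b hab
  unfold ftO at hab
  split_ifs at hab with h1 h2 h2 <;>
    (simp only [Fin.mk.injEq] at hab; exact Fin.ext (by omega))

end AuxG

theorem stmt_4 (N : ℕ) (hN : 1 ≤ N) (q : Fin N → ℝ)
    (hnn : ∀ i, 0 ≤ q i) (hsum : ∑ i, q i = 1)
    (hsort : ∀ i j : Fin N, i ≤ j → q j ≤ q i) :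
    guessOpt N q 0 =
      (1 / 2) * (guess N q + ∑ k ∈ Finset.univ.filter (fun k : Fin N => (k : ℕ) % 2 = 0), q k) := by
  classical
  set g : Fin N → ℝ := fun i => ((((i : ℕ) / 2 : ℕ) : ℝ) + 1) * q i with hg
  -- Step A : guess equals the sorted sum
  have hguess : guess N q = ∑ i : Fin N, (((i : ℕ) : ℝ) + 1) * q i := by
    apply le_antisymm
    · have h := Finset.inf'_le
        (fun σ : Equiv.Perm (Fin N) => ∑ k : Fin N, ((k : ℝ) + 1) * q (σ k))
        (Finset.mem_univ (1 : Equiv.Perm (Fin N)))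
      simpa [guess] using h
    · apply Finset.le_inf'
      intro σ _
      have hfib : ∀ v : ℕ,
          (univ.filter fun i : Fin N => (σ.symm i : ℕ) + 1 ≤ v).card ≤ 1 * v := by
        intro v
        refine le_trans (Finset.card_le_card ?_)
          (le_trans (card_filter_perm_le σ (fun _ => True) v) (by omega))
        intro i hi
        simp only [mem_filter, mem_univ, true_and, true_and] at hi ⊢
        simpa using hi
      have hK := counting 1 one_pos q hnn hsort (fun i => (σ.symm i : ℕ) + 1)
        (fun i => by show (σ.symm i : ℕ) + 1 ≤ N; have := (σ.symm i).isLt; omega) hfib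
      have he : ∑ i : Fin N, ((((σ.symm i : ℕ) + 1 : ℕ)) : ℝ) * q i
          = ∑ k : Fin N, ((k : ℝ) + 1) * q (σ k) := by
        refine (Fintype.sum_bijective σ σ.bijective _ _ fun k => ?_).symm
        simp
      rw [← he]
      simpa using hK
  -- Step B : RHS rewrite
  have hRHS : (1 / 2 : ℝ) * (∑ i : Fin N, (((i : ℕ) : ℝ) + 1) * q i
        + ∑ k ∈ univ.filter (fun k : Fin N => (k : ℕ) % 2 = 0), q k)
      = ∑ i : Fin N, g i := by
    rw [Finset.sum_filter, ← Finset.sum_add_distrib, Finset.mul_sum]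
    refine Finset.sum_congr rfl fun i _ => ?_
    obtain ⟨j, hj | hj⟩ := Nat.even_or_odd' (i : ℕ)
    · have h2 : (i : ℕ) / 2 = j := by omega
      have hm : (i : ℕ) % 2 = 0 := by omega
      simp only [hg]
      rw [if_pos hm, h2, hj]
      push_cast; ring
    · have h2 : (i : ℕ) / 2 = j := by omega
      have hm : ¬ (i : ℕ) % 2 = 0 := by omega
      simp only [hg]
      rw [if_neg hm, h2, hj]
      push_cast; ring
  -- Step C : lower bound
  have hlow : ∑ i : Fin N, g i ≤ guessOpt N q 0 := by
    unfold guessOpt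
    apply Finset.le_inf'
    intro A _
    unfold guessA
    rw [Fintype.sum_bool]
    have key : ∀ σt σf : Equiv.Perm (Fin N),
        ∑ i : Fin N, g i ≤
          (∑ k : Fin N, ((k : ℝ) + 1) * q (σt k) *
            (if ((σt k ∈ A) ↔ (true = true)) then 1 - 0 else 0))
          + (∑ k : Fin N, ((k : ℝ) + 1) * q (σf k) *
            (if ((σf k ∈ A) ↔ (false = true)) then 1 - 0 else 0)) := by
      intro σt σf
      set c : Fin N → ℕ :=
        fun i => (if i ∈ A then (σt.symm i : ℕ) else (σf.symm i : ℕ)) + 1 with hc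
      have h1 : (∑ k : Fin N, ((k : ℝ) + 1) * q (σt k) *
            (if ((σt k ∈ A) ↔ (true = true)) then 1 - 0 else 0))
          = ∑ i : Fin N, (if i ∈ A then (c i : ℝ) * q i else 0) := by
        refine Fintype.sum_bijective σt σt.bijective _ _ fun k => ?_
        by_cases hk : σt k ∈ A
        · simp [hc, hk]
        · simp [hc, hk]
      have h2 : (∑ k : Fin N, ((k : ℝ) + 1) * q (σf k) *
            (if ((σf k ∈ A) ↔ (false = true)) then 1 - 0 else 0))
          = ∑ i : Fin N, (if i ∈ A then 0 else (c i : ℝ) * q i) := by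
        refine Fintype.sum_bijective σf σf.bijective _ _ fun k => ?_
        by_cases hk : σf k ∈ A
        · simp [hc, hk]
        · simp [hc, hk]
      rw [h1, h2, ← Finset.sum_add_distrib]
      have h3 : ∀ i : Fin N,
          (if i ∈ A then (c i : ℝ) * q i else 0) + (if i ∈ A then 0 else (c i : ℝ) * q i)
            = (c i : ℝ) * q i := by
        intro i; by_cases hi : i ∈ A <;> simp [hi]
      simp_rw [h3]
      have hfib : ∀ v : ℕ, (univ.filter fun i : Fin N => c i ≤ v).card ≤ 2 * v := by
        intro v
        have hsub : univ.filter (fun i : Fin N => c i ≤ v)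
            ⊆ (univ.filter fun i : Fin N => (i ∈ A) ∧ (σt.symm i : ℕ) + 1 ≤ v)
              ∪ (univ.filter fun i : Fin N => (i ∉ A) ∧ (σf.symm i : ℕ) + 1 ≤ v) := by
          intro i hi
          simp only [hc, mem_filter, mem_univ, true_and, mem_union] at hi ⊢
          by_cases hA : i ∈ A
          · left; exact ⟨hA, by simpa [hA] using hi⟩
          · right; exact ⟨hA, by simpa [hA] using hi⟩
        calc (univ.filter fun i : Fin N => c i ≤ v).card
            ≤ _ := Finset.card_le_card hsub
          _ ≤ _ + _ := Finset.card_union_le _ _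
          _ ≤ v + v := add_le_add (card_filter_perm_le σt _ v) (card_filter_perm_le σf _ v)
          _ = 2 * v := by ring
      have hK := counting 2 two_pos q hnn hsort c
        (fun i => by
          simp only [hc]
          split_ifs with h
          · have := (σt.symm i).isLt; omega
          · have := (σf.symm i).isLt; omega) hfib
      simpa [hg] using hK
    obtain ⟨σt, -, ht⟩ := Finset.exists_mem_eq_inf'
      (⟨1, Finset.mem_univ 1⟩ : (univ : Finset (Equiv.Perm (Fin N))).Nonempty)
      (fun σ : Equiv.Perm (Fin N) => ∑ k : Fin N, ((k : ℝ) + 1) * q (σ k) *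
        (if ((σ k ∈ A) ↔ (true = true)) then 1 - 0 else 0))
    obtain ⟨σf, -, hf⟩ := Finset.exists_mem_eq_inf'
      (⟨1, Finset.mem_univ 1⟩ : (univ : Finset (Equiv.Perm (Fin N))).Nonempty)
      (fun σ : Equiv.Perm (Fin N) => ∑ k : Fin N, ((k : ℝ) + 1) * q (σ k) *
        (if ((σ k ∈ A) ↔ (false = true)) then 1 - 0 else 0))
    rw [ht, hf]
    exact key σt σf
  -- Step D : upper bound
  have hup : guessOpt N q 0 ≤ ∑ i : Fin N, g i := by
    have h1 : guessOpt N q 0 ≤ guessA N q 0 (zigzag N) :=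
      Finset.inf'_le _ (Finset.mem_univ _)
    refine h1.trans ?_
    unfold guessA
    rw [Fintype.sum_bool]
    set σE : Equiv.Perm (Fin N) := Equiv.ofBijective (ftE N) (ftE_bij N) with hσE
    set σO : Equiv.Perm (Fin N) := Equiv.ofBijective (ftO N) (ftO_bij N) with hσO
    have hEapp : ∀ k, σE k = ftE N k := fun k => rfl
    have hOapp : ∀ k, σO k = ftO N k := fun k => rfl
    have hE : (∑ k : Fin N, ((k : ℝ) + 1) * q (σE k) *
          (if ((σE k ∈ zigzag N) ↔ (true = true)) then 1 - 0 else 0))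
        = ∑ i : Fin N, ((((i : ℕ) / 2 : ℕ) : ℝ) + 1) * q i *
          (if (i : ℕ) % 2 = 0 then 1 else 0) := by
      refine Fintype.sum_bijective σE σE.bijective _ _ fun k => ?_
      rw [hEapp]
      by_cases h : (k : ℕ) < (N + 1) / 2
      · have hv : (ftE N k : ℕ) = 2 * (k : ℕ) := by simp [ftE, h]
        have hmem : ftE N k ∈ zigzag N := by
          simp only [zigzag, mem_filter, mem_univ, true_and, hv]; omega
        have hdiv : (ftE N k : ℕ) / 2 = (k : ℕ) := by omega
        have hmod : (ftE N k : ℕ) % 2 = 0 := by omega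
        rw [if_pos (iff_of_true hmem rfl), if_pos hmod, hdiv]
        ring
      · have hv : (ftE N k : ℕ) = 2 * ((k : ℕ) - (N + 1) / 2) + 1 := by simp [ftE, h]
        have hmem : ftE N k ∉ zigzag N := by
          simp only [zigzag, mem_filter, mem_univ, true_and, hv]; omega
        have hmod : ¬ (ftE N k : ℕ) % 2 = 0 := by omega
        rw [if_neg (by simp [hmem]), if_neg hmod]
        ring
    have hO : (∑ k : Fin N, ((k : ℝ) + 1) * q (σO k) *
          (if ((σO k ∈ zigzag N) ↔ (false = true)) then 1 - 0 else 0))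
        = ∑ i : Fin N, ((((i : ℕ) / 2 : ℕ) : ℝ) + 1) * q i *
          (if (i : ℕ) % 2 = 1 then 1 else 0) := by
      refine Fintype.sum_bijective σO σO.bijective _ _ fun k => ?_
      rw [hOapp]
      by_cases h : (k : ℕ) < N / 2
      · have hv : (ftO N k : ℕ) = 2 * (k : ℕ) + 1 := by simp [ftO, h]
        have hmem : ftO N k ∉ zigzag N := by
          simp only [zigzag, mem_filter, mem_univ, true_and, hv]; omega
        have hdiv : (ftO N k : ℕ) / 2 = (k : ℕ) := by omega
        have hmod : (ftO N k : ℕ) % 2 = 1 := by omega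
        rw [if_pos (iff_of_false hmem (by simp)), if_pos hmod, hdiv]
        ring
      · have hv : (ftO N k : ℕ) = 2 * ((k : ℕ) - N / 2) := by simp [ftO, h]
        have hmem : ftO N k ∈ zigzag N := by
          simp only [zigzag, mem_filter, mem_univ, true_and, hv]; omega
        have hmod : ¬ (ftO N k : ℕ) % 2 = 1 := by omega
        rw [if_neg (by simp [hmem]), if_neg hmod]
        ring
    refine le_trans (add_le_add
      (Finset.inf'_le _ (Finset.mem_univ σE)) (Finset.inf'_le _ (Finset.mem_univ σO))) ?_
    rw [hE, hO, ← Finset.sum_add_distrib]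
    apply le_of_eq
    refine Finset.sum_congr rfl fun i _ => ?_
    simp only [hg]
    by_cases hp : (i : ℕ) % 2 = 0
    · rw [if_pos hp, if_neg (by omega)]; ring
    · rw [if_neg hp, if_pos (by omega)]; ring
  have hopt : guessOpt N q 0 = ∑ i : Fin N, g i := le_antisymm hup hlow
  rw [hopt, hguess, hRHS]
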